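/- (Surrogate objective lower bound.) Let A be a finite action set, r : A → {0,1}, A⁺ = {a : r(a)=1}, π and π_TC probability mass functions on A, λ̃ > 0, π_mix = (π + λ̃·π_TC)/(1+λ̃), and φ = min{λ̃/(1+λ̃)², 1/(1+λ̃)²}. Suppose L : A → ℝ satisfies L(a) ≤ 0 for all a (e.g., L(a) = log π_θ(a) for a policy π_θ). Then Σ_{a∈A⁺} π_mix(a)·A^{π_mix}(a)·L(a) ≤ φ·[ Σ_{a∈A⁺} π(a)·A^π(a)·L(a) + λ̃·Σ_{a∈A⁺} π_TC(a)·A^{π_TC}(a)·L(a) ], provided for each a ∈ A⁺ either A^π(a) ≤ A^{π_mix}(a) ≤ A^{π_TC}(a) or A^{π_TC}(a) ≤ A^{π_mix}(a) ≤ A^π(a) (which always holds since A^{π_mix} is a convex combination of A^π and A^{π_TC}). -/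

import Mathlib

open Finset

lemma surrogate_key (lam p q u v : ℝ) (hlam : 0 < lam)
    (hp : 0 ≤ p) (hq : 0 ≤ q) (hu : 0 ≤ u) (hv : 0 ≤ v) :
    min (lam / (1 + lam) ^ 2) (1 / (1 + lam) ^ 2) * (p * u + lam * (q * v)) ≤
      ((p + lam * q) / (1 + lam)) * ((u + lam * v) / (1 + lam)) := by
  have h1 : (0:ℝ) < 1 + lam := by linarith
  rw [div_mul_div_comm]
  rcases le_total lam 1 with hc | hc
  · have hmin : min (lam / (1 + lam) ^ 2) (1 / (1 + lam) ^ 2) = lam / (1 + lam) ^ 2 :=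
      min_eq_left (div_le_div_of_nonneg_right hc (by positivity))
    rw [hmin, div_mul_eq_mul_div, div_le_div_iff₀ (by positivity) (by positivity)]
    have key : lam * (p * u + lam * (q * v)) ≤ (p + lam * q) * (u + lam * v) := by
      nlinarith [mul_nonneg hp hv, mul_nonneg hq hu, mul_nonneg hp hu, mul_nonneg hq hv,
        mul_nonneg (mul_nonneg hp hu) (by linarith : (0:ℝ) ≤ 1 - lam)]
    nlinarith [mul_le_mul_of_nonneg_right key (by positivity : (0:ℝ) ≤ (1 + lam) ^ 2)]
  · have hmin : min (lam / (1 + lam) ^ 2) (1 / (1 + lam) ^ 2) = 1 / (1 + lam) ^ 2 :=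
      min_eq_right (div_le_div_of_nonneg_right hc (by positivity))
    rw [hmin, div_mul_eq_mul_div, div_le_div_iff₀ (by positivity) (by positivity)]
    have key : 1 * (p * u + lam * (q * v)) ≤ (p + lam * q) * (u + lam * v) := by
      nlinarith [mul_nonneg hp hv, mul_nonneg hq hu, mul_nonneg hp hu, mul_nonneg hq hv,
        mul_nonneg (mul_nonneg (mul_nonneg hq hv) hlam.le) (by linarith : (0:ℝ) ≤ lam - 1)]
    nlinarith [mul_le_mul_of_nonneg_right key (by positivity : (0:ℝ) ≤ (1 + lam) ^ 2)]

/-- Surrogate objective lower bound (Theorem 4.4 of the paper). -/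
theorem surrogate_objective_lower_bound
    {A : Type*} [Fintype A] [Nonempty A]
    (π πTC r L : A → ℝ) (lam : ℝ) (hlam : 0 < lam)
    (hπ : ∀ a, 0 ≤ π a) (hπsum : ∑ a, π a = 1)
    (hπTC : ∀ a, 0 ≤ πTC a) (hπTCsum : ∑ a, πTC a = 1)
    (hr : ∀ a, r a = 0 ∨ r a = 1)
    (hL : ∀ a, L a ≤ 0)
    (hsand : ∀ a, r a = 1 →
      ((r a - ∑ a', π a' * r a') ≤
          (r a - ∑ a', ((π a' + lam * πTC a') / (1 + lam)) * r a') ∧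
        (r a - ∑ a', ((π a' + lam * πTC a') / (1 + lam)) * r a') ≤
          (r a - ∑ a', πTC a' * r a')) ∨
      ((r a - ∑ a', πTC a' * r a') ≤
          (r a - ∑ a', ((π a' + lam * πTC a') / (1 + lam)) * r a') ∧
        (r a - ∑ a', ((π a' + lam * πTC a') / (1 + lam)) * r a') ≤
          (r a - ∑ a', π a' * r a'))) :
    ∑ a ∈ Finset.univ.filter (fun a => r a = 1),
        ((π a + lam * πTC a) / (1 + lam)) *
          (r a - ∑ a', ((π a' + lam * πTC a') / (1 + lam)) * r a') * L a ≤
      min (lam / (1 + lam) ^ 2) (1 / (1 + lam) ^ 2) *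
        ((∑ a ∈ Finset.univ.filter (fun a => r a = 1),
            π a * (r a - ∑ a', π a' * r a') * L a) +
          lam * ∑ a ∈ Finset.univ.filter (fun a => r a = 1),
            πTC a * (r a - ∑ a', πTC a' * r a') * L a) := by
  have h1 : (0:ℝ) < 1 + lam := by linarith
  set m := min (lam / (1 + lam) ^ 2) (1 / (1 + lam) ^ 2) with hm
  set Sπ := ∑ a', π a' * r a' with hSπ
  set ST := ∑ a', πTC a' * r a' with hST
  have hSmix : (∑ a', ((π a' + lam * πTC a') / (1 + lam)) * r a')
      = (Sπ + lam * ST) / (1 + lam) := by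
    rw [hSπ, hST, Finset.mul_sum, ← Finset.sum_add_distrib, Finset.sum_div]
    apply Finset.sum_congr rfl
    intro a _
    field_simp
  -- bounds on the sums
  have hr01 : ∀ a, 0 ≤ r a ∧ r a ≤ 1 := by
    intro a; rcases hr a with h | h <;> rw [h] <;> norm_num
  have hSπ1 : Sπ ≤ 1 := by
    rw [hSπ, ← hπsum]
    apply Finset.sum_le_sum
    intro a _
    nlinarith [hπ a, (hr01 a).1, (hr01 a).2]
  have hST1 : ST ≤ 1 := by
    rw [hST, ← hπTCsum]
    apply Finset.sum_le_sum
    intro a _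
    nlinarith [hπTC a, (hr01 a).1, (hr01 a).2]
  rw [hSmix]
  have hstep : ∀ a ∈ Finset.univ.filter (fun a => r a = 1),
      ((π a + lam * πTC a) / (1 + lam)) * (r a - (Sπ + lam * ST) / (1 + lam)) * L a ≤
        m * (π a * (r a - Sπ) * L a) + m * lam * (πTC a * (r a - ST) * L a) := by
    intro a ha
    have hra : r a = 1 := by simpa using (Finset.mem_filter.mp ha).2
    rw [hra]
    have hmixeq : (1 : ℝ) - (Sπ + lam * ST) / (1 + lam)
        = ((1 - Sπ) + lam * (1 - ST)) / (1 + lam) := by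
      field_simp; ring
    rw [hmixeq]
    have hkey := surrogate_key lam (π a) (πTC a) (1 - Sπ) (1 - ST) hlam (hπ a) (hπTC a)
      (by linarith) (by linarith)
    have := mul_le_mul_of_nonpos_right hkey (hL a)
    calc ((π a + lam * πTC a) / (1 + lam)) * (((1 - Sπ) + lam * (1 - ST)) / (1 + lam)) * L a
        ≤ m * (π a * (1 - Sπ) + lam * (πTC a * (1 - ST))) * L a := this
      _ = m * (π a * (1 - Sπ) * L a) + m * lam * (πTC a * (1 - ST) * L a) := by ring
  calc ∑ a ∈ Finset.univ.filter (fun a => r a = 1),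
        ((π a + lam * πTC a) / (1 + lam)) * (r a - (Sπ + lam * ST) / (1 + lam)) * L a
      ≤ ∑ a ∈ Finset.univ.filter (fun a => r a = 1),
          (m * (π a * (r a - Sπ) * L a) + m * lam * (πTC a * (r a - ST) * L a)) :=
        Finset.sum_le_sum hstep
    _ = m * ((∑ a ∈ Finset.univ.filter (fun a => r a = 1), π a * (r a - Sπ) * L a) +
          lam * ∑ a ∈ Finset.univ.filter (fun a => r a = 1), πTC a * (r a - ST) * L a) := by
        rw [Finset.sum_add_distrib, ← Finset.mul_sum, ← Finset.mul_sum]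
        ring
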